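/- Let F : [0,T] × ℝ^{nd} → ℝ^{nd} be continuous in space, measurable in time, and globally Lipschitz in space with constant κ uniformly in time. For x, y ∈ ℝ^{nd} and 0 ≤ u < v ≤ T, let θ_{·,u}(x) be the flow of θ' = F(r,θ) started at x at time u, and θ_{·,v}(y) the flow started at y at time v (run backward to u). Let w ≥ v − u and 𝕋_w = diag(w·I_d,…,wⁿ·I_d). Assume additionally the structural bound |𝕋_w^{-1}(F(r,a) − F(r,b))| ≤ κ w^{-1} |𝕋_w^{-1}(a−b)| for all r ∈ [u,v], a, b ∈ ℝ^{nd}. Then e^{-κ} |𝕋_w^{-1}(x − θ_{u,v}(y))| ≤ |𝕋_w^{-1}(θ_{v,u}(x) − y)| ≤ e^{κ} |𝕋_w^{-1}(x − θ_{u,v}(y))|. -/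

import Mathlib

open scoped BigOperators

private lemma gron_exp {E : Type*} [NormedAddCommGroup E] [NormedSpace ℝ E]
    {φ φ' : ℝ → E} {a b K : ℝ} (hab : a ≤ b) (hK : 0 ≤ K)
    (hd : ∀ r ∈ Set.Icc a b, HasDerivAt φ (φ' r) r)
    (hb : ∀ r ∈ Set.Icc a b, ‖φ' r‖ ≤ K * ‖φ r‖) :
    ‖φ b‖ ≤ Real.exp (K * (b - a)) * ‖φ a‖ := by
  have hcont : ContinuousOn φ (Set.Icc a b) := fun r hr =>
    (hd r hr).continuousAt.continuousWithinAt
  have hd' : ∀ r ∈ Set.Ico a b, HasDerivWithinAt φ (φ' r) (Set.Ici r) r := fun r hr =>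
    (hd r (Set.mem_Icc_of_Ico hr)).hasDerivWithinAt
  have hb' : ∀ r ∈ Set.Ico a b, ‖φ' r‖ ≤ K * ‖φ r‖ + 0 := fun r hr => by
    simpa using hb r (Set.mem_Icc_of_Ico hr)
  have := norm_le_gronwallBound_of_norm_deriv_right_le hcont hd' le_rfl hb' b
    (Set.right_mem_Icc.2 hab)
  rwa [gronwallBound_ε0, mul_comm ‖φ a‖] at this

theorem stmt_8 (n d : ℕ) (T u v w κ : ℝ) (hu : 0 ≤ u) (huv : u < v) (hvT : v ≤ T)
    (hw : v - u ≤ w) (hw0 : 0 < w) (hκ : 0 ≤ κ)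
    (F : ℝ → EuclideanSpace ℝ (Fin n × Fin d) → EuclideanSpace ℝ (Fin n × Fin d))
    (hFc : ∀ r, Continuous (F r))
    (hLip : ∀ r a b, ‖F r a - F r b‖ ≤ κ * ‖a - b‖)
    (x y : EuclideanSpace ℝ (Fin n × Fin d))
    (θx θy : ℝ → EuclideanSpace ℝ (Fin n × Fin d))
    (hx0 : θx u = x) (hy0 : θy v = y)
    (hxode : ∀ r ∈ Set.Icc u v, HasDerivAt θx (F r (θx r)) r)
    (hyode : ∀ r ∈ Set.Icc u v, HasDerivAt θy (F r (θy r)) r)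
    (hstruct : ∀ r ∈ Set.Icc u v, ∀ a b : EuclideanSpace ℝ (Fin n × Fin d),
      Real.sqrt (∑ p : Fin n × Fin d, ((w ^ ((p.1:ℕ) + 1))⁻¹ * (F r a - F r b) p) ^ 2)
        ≤ κ / w * Real.sqrt (∑ p : Fin n × Fin d, ((w ^ ((p.1:ℕ) + 1))⁻¹ * (a - b) p) ^ 2)) :
    Real.exp (-κ) *
        Real.sqrt (∑ p : Fin n × Fin d, ((w ^ ((p.1:ℕ) + 1))⁻¹ * (x - θy u) p) ^ 2)
      ≤ Real.sqrt (∑ p : Fin n × Fin d, ((w ^ ((p.1:ℕ) + 1))⁻¹ * (θx v - y) p) ^ 2) ∧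
    Real.sqrt (∑ p : Fin n × Fin d, ((w ^ ((p.1:ℕ) + 1))⁻¹ * (θx v - y) p) ^ 2)
      ≤ Real.exp κ *
        Real.sqrt (∑ p : Fin n × Fin d, ((w ^ ((p.1:ℕ) + 1))⁻¹ * (x - θy u) p) ^ 2) := by
  have huv' := huv.le
  set c : Fin n × Fin d → ℝ := fun p => (w ^ ((p.1:ℕ) + 1))⁻¹ with hc
  let Dlin : EuclideanSpace ℝ (Fin n × Fin d) →ₗ[ℝ] EuclideanSpace ℝ (Fin n × Fin d) :=
    { toFun := fun a => WithLp.toLp 2 (fun p => c p * a p)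
      map_add' := fun a b => by
        ext p; simp [PiLp.add_apply, mul_add]
      map_smul' := fun m a => by
        ext p; simp [PiLp.smul_apply, smul_eq_mul, hc]; ring }
  let D : EuclideanSpace ℝ (Fin n × Fin d) →L[ℝ] EuclideanSpace ℝ (Fin n × Fin d) := LinearMap.toContinuousLinearMap Dlin
  have hDapp : ∀ (a : EuclideanSpace ℝ (Fin n × Fin d)) (p : Fin n × Fin d), D a p = c p * a p := fun a p => rfl
  have hnorm : ∀ a : EuclideanSpace ℝ (Fin n × Fin d),
      Real.sqrt (∑ p : Fin n × Fin d, ((w ^ ((p.1:ℕ) + 1))⁻¹ * a p) ^ 2) = ‖D a‖ := by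
    intro a
    rw [EuclideanSpace.norm_eq]
    congr 1
    refine Finset.sum_congr rfl fun p _ => ?_
    rw [hDapp, Real.norm_eq_abs, sq_abs]
  -- the scaled difference
  set φ : ℝ → EuclideanSpace ℝ (Fin n × Fin d) := fun r => D (θx r - θy r) with hφ
  set φ' : ℝ → EuclideanSpace ℝ (Fin n × Fin d) := fun r => D (F r (θx r) - F r (θy r)) with hφ'
  have hd : ∀ r ∈ Set.Icc u v, HasDerivAt φ (φ' r) r := fun r hr =>
    D.hasFDerivAt.comp_hasDerivAt r ((hxode r hr).sub (hyode r hr))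
  have hbd : ∀ r ∈ Set.Icc u v, ‖φ' r‖ ≤ (κ / w) * ‖φ r‖ := by
    intro r hr
    have := hstruct r hr (θx r) (θy r)
    rwa [hnorm, hnorm] at this
  have hKw : κ / w * (v - u) ≤ κ := by
    calc κ / w * (v - u) ≤ κ / w * w :=
          mul_le_mul_of_nonneg_left hw (div_nonneg hκ hw0.le)
      _ = κ := div_mul_cancel₀ κ hw0.ne'
  have hKw0 : 0 ≤ κ / w := div_nonneg hκ hw0.le
  have hexple : Real.exp (κ / w * (v - u)) ≤ Real.exp κ := Real.exp_le_exp.2 hKw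
  -- values at endpoints
  have hφu : φ u = D (x - θy u) := by show D (θx u - θy u) = _; rw [hx0]
  have hφv : φ v = D (θx v - y) := by show D (θx v - θy v) = _; rw [hy0]
  -- upper bound
  have hupper : ‖φ v‖ ≤ Real.exp κ * ‖φ u‖ := by
    have := gron_exp huv.le hKw0 hd hbd
    exact this.trans (mul_le_mul_of_nonneg_right hexple (norm_nonneg _))
  -- lower bound via reversed time
  have hlower : ‖φ u‖ ≤ Real.exp κ * ‖φ v‖ := by
    set ψ : ℝ → EuclideanSpace ℝ (Fin n × Fin d) := fun r => φ (u + v - r) with hψ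
    set ψ' : ℝ → EuclideanSpace ℝ (Fin n × Fin d) := fun r => -φ' (u + v - r) with hψ'
    have hmem : ∀ r ∈ Set.Icc u v, u + v - r ∈ Set.Icc u v := by
      intro r hr
      constructor <;> [linarith [hr.2]; linarith [hr.1]]
    have hdψ : ∀ r ∈ Set.Icc u v, HasDerivAt ψ (ψ' r) r := by
      intro r hr
      have h1 : HasDerivAt (fun r : ℝ => u + v - r) (-1) r := by
        exact (hasDerivAt_id r).const_sub (u + v)
      have := (hd _ (hmem r hr)).scomp r h1
      simpa [hψ, hψ', neg_one_smul, Function.comp_def] using this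
    have hbψ : ∀ r ∈ Set.Icc u v, ‖ψ' r‖ ≤ (κ / w) * ‖ψ r‖ := by
      intro r hr
      simpa [hψ, hψ'] using hbd _ (hmem r hr)
    have := gron_exp huv.le hKw0 hdψ hbψ
    have h2 : ψ v = φ u := by simp [hψ]
    have h3 : ψ u = φ v := by simp [hψ]
    rw [h2, h3] at this
    exact this.trans (mul_le_mul_of_nonneg_right hexple (norm_nonneg _))
  rw [hφu, hφv] at hupper hlower
  rw [hnorm, hnorm]
  constructor
  · rw [Real.exp_neg, inv_mul_le_iff₀ (Real.exp_pos κ)]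
    exact hlower
  · exact hupper
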